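/- Let ϑ̇, λ̇, Q, S, B, G, α, F, a, f be real numbers with (ϑ̇, λ̇) ≠ (0, 0) and Q·B > S². Let 𝒜 ⊆ ℝ⁸ be the set of all (Qϑ, Sϑ, Bϑ, Gϑ, Qλ, Sλ, Bλ, Gλ) satisfying Qϑ + Sλ = Q·α + F, Sϑ + Bλ = S·α + G, Q·Bϑ + S·Bλ − S·Sϑ − B·Sλ = 0, S·Qϑ + B·Qλ − Q·Sϑ − S·Sλ = 0, Gϑ = −S·a, Gλ = Q·a + f, and let ℒ ⊆ ℝ⁴ be the set of all (Q̇, Ṡ, Ḃ, Ġ) satisfying Ġ = −S·a·ϑ̇ + (Q·a + f)·λ̇ and Q·Ḃ + B·Q̇ − 2S·Ṡ = ((Q·B − S²)·α + B·F − S·G)·ϑ̇ + (Q·G − S·F)·λ̇. Then the linear map Φ : ℝ⁸ → ℝ⁴ sending (Qϑ, Sϑ, Bϑ, Gϑ, Qλ, Sλ, Bλ, Gλ) to (Qϑ·ϑ̇ + Qλ·λ̇, Sϑ·ϑ̇ + Sλ·λ̇, Bϑ·ϑ̇ + Bλ·λ̇, Gϑ·ϑ̇ + Gλ·λ̇) maps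 𝒜 bijectively onto ℒ. -/

import Mathlib

/-- Main assertion of Theorem 6.3 of the paper: the directional-derivative
map Φ maps the affine solution space 𝒜 of the pointwise system (foe)
bijectively onto the affine space ℒ defined by the equations (dge).
Coordinates of v : Fin 8 → ℝ: (Qϑ, Sϑ, Bϑ, Gϑ, Qλ, Sλ, Bλ, Gλ);
`a` and `f` play the role of α′ and F′. -/
theorem stmt_6 (td ld Q S B G α F a f : ℝ)
    (h : (td, ld) ≠ (0, 0)) (hdet : Q * B > S ^ 2) :
    Set.BijOn
      (fun v : Fin 8 → ℝ =>
        (![v 0 * td + v 4 * ld, v 1 * td + v 5 * ld,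
           v 2 * td + v 6 * ld, v 3 * td + v 7 * ld] : Fin 4 → ℝ))
      {v : Fin 8 → ℝ |
        v 0 + v 5 = Q * α + F ∧
        v 1 + v 6 = S * α + G ∧
        Q * v 2 + S * v 6 - S * v 1 - B * v 5 = 0 ∧
        S * v 0 + B * v 4 - Q * v 1 - S * v 5 = 0 ∧
        v 3 = -S * a ∧
        v 7 = Q * a + f}
      {w : Fin 4 → ℝ |
        w 3 = -S * a * td + (Q * a + f) * ld ∧
        Q * w 2 + B * w 0 - 2 * S * w 1 =
          ((Q * B - S ^ 2) * α + B * F - S * G) * td + (Q * G - S * F) * ld} := by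
  have hQB : Q * B > 0 := lt_of_le_of_lt (sq_nonneg S) hdet
  have hQ : Q ≠ 0 := fun h0 => by simp [h0] at hQB
  have hB : B ≠ 0 := fun h0 => by simp [h0] at hQB
  have hne : td ≠ 0 ∨ ld ≠ 0 := by
    by_contra hc
    push_neg at hc
    exact h (by simp [hc.1, hc.2])
  have hDne : B * td ^ 2 - 2 * S * td * ld + Q * ld ^ 2 ≠ 0 := by
    intro h0
    rcases hne with ht | hl
    · have ht2 : td ^ 2 > 0 := by positivity
      have key : Q * (B * td ^ 2 - 2 * S * td * ld + Q * ld ^ 2)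
          = (Q * ld - S * td) ^ 2 + (Q * B - S ^ 2) * td ^ 2 := by ring
      rw [h0, mul_zero] at key
      nlinarith [sq_nonneg (Q * ld - S * td), mul_pos (sub_pos.mpr hdet) ht2]
    · have hl2 : ld ^ 2 > 0 := by positivity
      have key : B * (B * td ^ 2 - 2 * S * td * ld + Q * ld ^ 2)
          = (B * td - S * ld) ^ 2 + (Q * B - S ^ 2) * ld ^ 2 := by ring
      rw [h0, mul_zero] at key
      nlinarith [sq_nonneg (B * td - S * ld), mul_pos (sub_pos.mpr hdet) hl2]
  set D := B * td ^ 2 - 2 * S * td * ld + Q * ld ^ 2 with hDdef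
  refine ⟨?_, ?_, ?_⟩
  · -- MapsTo
    rintro v ⟨h1, h2, h3, h4, h5, h6⟩
    refine ⟨?_, ?_⟩
    · show v 3 * td + v 7 * ld = _
      rw [h5, h6]
    · show Q * (v 2 * td + v 6 * ld) + B * (v 0 * td + v 4 * ld)
          - 2 * S * (v 1 * td + v 5 * ld) = _
      linear_combination td * h3 + ld * h4 + (B * td - S * ld) * h1
        + (Q * ld - S * td) * h2
  · -- InjOn
    rintro v ⟨h1, h2, h3, h4, h5, h6⟩ v' ⟨g1, g2, g3, g4, g5, g6⟩ himg
    have e1 : v 1 * td + v 5 * ld = v' 1 * td + v' 5 * ld := congrFun himg 1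
    have e2 : v 2 * td + v 6 * ld = v' 2 * td + v' 6 * ld := congrFun himg 2
    have a2 : Q * v 2 = 2 * S * v 1 + B * v 5 - S * (S * α + G) := by
      linear_combination h3 - S * h2
    have b2 : Q * v' 2 = 2 * S * v' 1 + B * v' 5 - S * (S * α + G) := by
      linear_combination g3 - S * g2
    have eqiii : (2 * S * td - Q * ld) * (v 1 - v' 1) + B * td * (v 5 - v' 5) = 0 := by
      linear_combination Q * e2 - td * a2 + td * b2 - Q * ld * h2 + Q * ld * g2
    have hu1 : v 1 = v' 1 := by
      have hd : D * (v 1 - v' 1) = 0 := by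
        rw [hDdef]; linear_combination B * td * e1 - ld * eqiii
      have := (mul_eq_zero.mp hd).resolve_left hDne
      linarith
    have hu5 : v 5 = v' 5 := by
      have hd : D * (v 5 - v' 5) = 0 := by
        rw [hDdef]; linear_combination td * eqiii - (2 * S * td - Q * ld) * e1
      have := (mul_eq_zero.mp hd).resolve_left hDne
      linarith
    have hu0 : v 0 = v' 0 := by linarith
    have hu6 : v 6 = v' 6 := by linarith
    have hu2 : v 2 = v' 2 := by
      apply mul_left_cancel₀ hQ
      rw [a2, b2, hu1, hu5]
    have hu4 : v 4 = v' 4 := by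
      apply mul_left_cancel₀ hB
      have a4 : B * v 4 = Q * v 1 + 2 * S * v 5 - S * (Q * α + F) := by
        linear_combination h4 - S * h1
      have b4 : B * v' 4 = Q * v' 1 + 2 * S * v' 5 - S * (Q * α + F) := by
        linear_combination g4 - S * g1
      rw [a4, b4, hu1, hu5]
    funext i
    fin_cases i
    exacts [hu0, hu1, hu2, h5.trans g5.symm, hu4, hu5, hu6, h6.trans g6.symm]
  · -- SurjOn
    rintro w ⟨hw3, hw2⟩
    set P1 := Q * α + F with hP1
    set P2 := S * α + G with hP2
    set R2 := Q * w 2 + S * P2 * td - Q * P2 * ld with hR2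
    set s := (B * td * w 1 - ld * R2) / D with hs
    set t := (td * R2 - (2 * S * td - Q * ld) * w 1) / D with ht
    refine ⟨![P1 - t, s, (2 * S * s + B * t - S * P2) / Q, -S * a,
        (Q * s + 2 * S * t - S * P1) / B, t, P2 - s, Q * a + f], ⟨?_, ?_, ?_, ?_, rfl, rfl⟩, ?_⟩
    · show P1 - t + t = Q * α + F
      rw [hP1]; ring
    · show s + (P2 - s) = S * α + G
      rw [hP2]; ring
    · show Q * ((2 * S * s + B * t - S * P2) / Q) + S * (P2 - s) - S * s - B * t = 0
      field_simp
      ring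
    · show S * (P1 - t) + B * ((Q * s + 2 * S * t - S * P1) / B) - Q * s - S * t = 0
      field_simp
      ring
    · have hw0 : w 0 = (((Q * B - S ^ 2) * α + B * F - S * G) * td
          + (Q * G - S * F) * ld - Q * w 2 + 2 * S * w 1) / B := by
        field_simp
        linarith [hw2]
      funext i
      fin_cases i
      · show (P1 - t) * td + (Q * s + 2 * S * t - S * P1) / B * ld = w 0
        rw [hs, ht, hR2, hw0, hP1, hP2]
        field_simp
        rw [hDdef]
        ring
      · show s * td + t * ld = w 1
        rw [hs, ht, hR2]
        field_simp
        rw [hDdef]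
        ring
      · show (2 * S * s + B * t - S * P2) / Q * td + (P2 - s) * ld = w 2
        rw [hs, ht, hR2, hP2]
        field_simp
        rw [hDdef]
        ring
      · show -S * a * td + (Q * a + f) * ld = w 3
        rw [hw3]
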